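/- Let f : X → X be a transitive subshift of finite type, and let Φ : X → ℝ^m be constant on cylinders of length k. Then Rot(Φ) is a polyhedron; more precisely, Rot(Φ) equals the convex hull of the finite set { rv(μ_x) : x a k-elementary periodic point of f }. -/

import Mathlib

open MeasureTheory

instance (d : ℕ) : TopologicalSpace (Fin d) := ⊥

instance (d : ℕ) : DiscreteTopology (Fin d) := ⟨rfl⟩

/-- The subshift of finite type determined by the 0-1 transition matrix `M`. -/
def SFT (d : ℕ) (M : Fin d → Fin d → Bool) : Type :=
  {x : ℕ → Fin d // ∀ n, M (x n) (x (n + 1)) = true}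

instance (d : ℕ) (M : Fin d → Fin d → Bool) : TopologicalSpace (SFT d M) :=
  inferInstanceAs (TopologicalSpace {x : ℕ → Fin d // ∀ n, M (x n) (x (n + 1)) = true})

instance (d : ℕ) (M : Fin d → Fin d → Bool) : MeasurableSpace (SFT d M) := borel _

instance (d : ℕ) (M : Fin d → Fin d → Bool) : BorelSpace (SFT d M) := ⟨rfl⟩

/-- The shift map on a subshift of finite type. -/
def SFT.shift {d : ℕ} {M : Fin d → Fin d → Bool} (x : SFT d M) : SFT d M :=
  ⟨fun n => x.1 (n + 1), fun n => x.2 (n + 1)⟩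

/-- `μ` is a shift-invariant Borel probability measure. -/
def InvariantProb {d : ℕ} {M : Fin d → Fin d → Bool} (μ : ProbabilityMeasure (SFT d M)) :
    Prop :=
  (μ : Measure (SFT d M)).map SFT.shift = (μ : Measure (SFT d M))

/-- The generalized rotation set of a potential `Φ` with respect to the shift. -/
def Rot {d : ℕ} {M : Fin d → Fin d → Bool} {m : ℕ}
    (Φ : SFT d M → EuclideanSpace ℝ (Fin m)) : Set (EuclideanSpace ℝ (Fin m)) :=
  {w | ∃ μ : ProbabilityMeasure (SFT d M), InvariantProb μ ∧
        (∫ x, Φ x ∂(μ : Measure (SFT d M))) = w}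

/-- `x` is a `k`-elementary periodic point of (smallest) period `n`: the cylinders of length
`k` generated by `x, f(x), …, f^{n−1}(x)` are pairwise disjoint. -/
def KElem {d : ℕ} {M : Fin d → Fin d → Bool} (k : ℕ) (x : SFT d M) (n : ℕ) : Prop :=
  0 < n ∧ Function.IsPeriodicPt SFT.shift n x ∧
  (∀ p, 0 < p → Function.IsPeriodicPt SFT.shift p x → n ≤ p) ∧
  (∀ i j, i < n → j < n → i ≠ j →
    ∃ l < k, (SFT.shift^[i] x).1 l ≠ (SFT.shift^[j] x).1 l)

set_option linter.unusedVariables false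


section Decomp

variable {E V : Type*}

/-- A simple directed cycle in the graph with edge set `E`, vertex set `V`,
head map `hd` and tail map `tl`, given as a periodic edge path with pairwise
distinct heads. -/
structure Cyc (hd tl : E → V) where
  n : ℕ
  npos : 0 < n
  e : ℕ → E
  per : ∀ i, e (i + n) = e i
  link : ∀ i, tl (e i) = hd (e (i + 1))
  inj : ∀ i j, i < n → j < n → i ≠ j → hd (e i) ≠ hd (e j)

variable {hd tl : E → V}

lemma Cyc.emod (c : Cyc hd tl) : ∀ i, c.e i = c.e (i % c.n) := by
  intro i
  induction i using Nat.strong_induction_on with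
  | _ i ih =>
    rcases lt_or_ge i c.n with h | h
    · rw [Nat.mod_eq_of_lt h]
    · have hn := c.npos
      have h2 : i - c.n + c.n = i := by omega
      calc c.e i = c.e (i - c.n + c.n) := by rw [h2]
        _ = c.e (i - c.n) := c.per _
        _ = c.e ((i - c.n) % c.n) := ih _ (by omega)
        _ = c.e (i % c.n) := by rw [← Nat.add_mod_right (i - c.n) c.n, h2]

lemma Cyc.einj (c : Cyc hd tl) {i j : ℕ} (hi : i < c.n) (hj : j < c.n)
    (h : c.e i = c.e j) : i = j := by
  by_contra hne
  exact c.inj i j hi hj hne (by rw [h])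

variable [DecidableEq E]

/-- The number of times (0 or 1) the cycle `c` passes through edge `f`, as a real. -/
def cntR (c : Cyc hd tl) (f : E) : ℝ :=
  ∑ i ∈ Finset.range c.n, if c.e i = f then 1 else 0

lemma cntR_eq (c : Cyc hd tl) (f : E) :
    cntR c f = if ∃ i, i < c.n ∧ c.e i = f then 1 else 0 := by
  unfold cntR
  split_ifs with h
  · obtain ⟨i, hi, hf⟩ := h
    rw [Finset.sum_eq_single i]
    · simp [hf]
    · intro j hj hne
      rw [if_neg]
      intro hj'
      exact hne (c.einj (Finset.mem_range.1 hj) hi (hj'.trans hf.symm))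
    · intro hi'
      exact absurd (Finset.mem_range.2 hi) hi'
  · apply Finset.sum_eq_zero
    intro i hi
    rw [if_neg]
    intro hf
    exact h ⟨i, Finset.mem_range.1 hi, hf⟩

lemma cntR_nonneg (c : Cyc hd tl) (f : E) : 0 ≤ cntR c f := by
  rw [cntR_eq]; split_ifs <;> norm_num

lemma cntR_le_one (c : Cyc hd tl) (f : E) : cntR c f ≤ 1 := by
  rw [cntR_eq]; split_ifs <;> norm_num

end Decomp

set_option linter.unusedSectionVars false
section Decomp2
variable {E V : Type*} [Fintype E] [DecidableEq E] [DecidableEq V] {hd tl : E → V}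

lemma sum_filter_cntR (c : Cyc hd tl) (P : E → Prop) [DecidablePred P] :
    ∑ f ∈ Finset.univ.filter P, cntR c f
      = ∑ i ∈ Finset.range c.n, if P (c.e i) then (1:ℝ) else 0 := by
  unfold cntR
  rw [Finset.sum_comm]
  refine Finset.sum_congr rfl fun i _ => ?_
  rw [Finset.sum_ite_eq (Finset.univ.filter P) (c.e i) (fun _ => (1:ℝ))]
  simp

lemma cyc_cons (c : Cyc hd tl) (v : V) :
    ∑ f ∈ Finset.univ.filter (fun f => hd f = v), cntR c f
      = ∑ f ∈ Finset.univ.filter (fun f => tl f = v), cntR c f := by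
  rw [sum_filter_cntR, sum_filter_cntR]
  have hlink : ∀ i, (if tl (c.e i) = v then (1:ℝ) else 0)
      = (if hd (c.e (i+1)) = v then (1:ℝ) else 0) := by
    intro i; rw [c.link i]
  rw [Finset.sum_congr rfl fun i _ => hlink i]
  set F : ℕ → ℝ := fun i => if hd (c.e i) = v then (1:ℝ) else 0 with hF
  have hFn : F c.n = F 0 := by
    simp only [hF]
    rw [show c.n = 0 + c.n from (Nat.zero_add _).symm, c.per 0]
  have h1 := Finset.sum_range_succ F c.n
  have h2 := Finset.sum_range_succ' F c.n
  rw [h1, hFn] at h2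
  linarith
 
lemma cntR_total (c : Cyc hd tl) : ∑ f, cntR c f = c.n := by
  have := sum_filter_cntR c (fun _ : E => True)
  simpa using this

end Decomp2

set_option linter.unusedSectionVars false
section D2b
variable {E V : Type*} [Fintype E] [Fintype V] [DecidableEq E] [DecidableEq V]

theorem exists_cyc (hd tl : E → V) (q : E → ℝ) (hq0 : ∀ f, 0 ≤ q f)
    (hcons : ∀ v, ∑ f ∈ Finset.univ.filter (fun f => hd f = v), q f
        = ∑ f ∈ Finset.univ.filter (fun f => tl f = v), q f)
    (hex : ∃ e₀, 0 < q e₀) :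
    ∃ c : Cyc hd tl, ∀ i, 0 < q (c.e i) := by
  classical
  obtain ⟨e₀, he₀⟩ := hex
  -- from any positively-weighted edge there is a positively-weighted successor
  have hstep : ∀ f : E, 0 < q f → ∃ f', hd f' = tl f ∧ 0 < q f' := by
    intro f hf
    have hin : f ∈ Finset.univ.filter (fun g => tl g = tl f) := by simp
    have hpos : 0 < ∑ g ∈ Finset.univ.filter (fun g => tl g = tl f), q g :=
      lt_of_lt_of_le hf (Finset.single_le_sum (fun g _ => hq0 g) hin)
    rw [← hcons] at hpos
    obtain ⟨g, hg, hgne⟩ := Finset.exists_ne_zero_of_sum_ne_zero (ne_of_gt hpos)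
    exact ⟨g, (Finset.mem_filter.1 hg).2, lt_of_le_of_ne (hq0 g) (Ne.symm hgne)⟩
  -- build an infinite forward path within the support
  let g : ℕ → {f : E // 0 < q f} := fun i =>
    Nat.rec ⟨e₀, he₀⟩ (fun _ p => ⟨(hstep p.1 p.2).choose, (hstep p.1 p.2).choose_spec.2⟩) i
  have hg : ∀ i, hd (g (i + 1)).1 = tl (g i).1 := fun i => (hstep (g i).1 (g i).2).choose_spec.1
  -- pigeonhole: two equal heads along the path
  have hpig : ∃ a b : Fin (Fintype.card V + 1), a ≠ b ∧ hd (g a).1 = hd (g b).1 := by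
    apply Fintype.exists_ne_map_eq_of_card_lt (fun i : Fin (Fintype.card V + 1) => hd (g i).1)
    simp
  have hQ : ∃ m, 0 < m ∧ ∃ s, hd (g (s + m)).1 = hd (g s).1 := by
    obtain ⟨a, b, hne, heq⟩ := hpig
    rcases Ne.lt_or_gt hne with h | h
    · have h' : (a:ℕ) < (b:ℕ) := h
      exact ⟨(b:ℕ) - (a:ℕ), by omega, a, by rw [show (a:ℕ) + ((b:ℕ) - (a:ℕ)) = (b:ℕ) by omega]; exact heq.symm⟩
    · have h' : (b:ℕ) < (a:ℕ) := h
      exact ⟨(a:ℕ) - (b:ℕ), by omega, b, by rw [show (b:ℕ) + ((a:ℕ) - (b:ℕ)) = (a:ℕ) by omega]; exact heq⟩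
  set n := Nat.find hQ with hn
  obtain ⟨hnpos, s, hs⟩ : 0 < n ∧ ∃ s, hd (g (s + n)).1 = hd (g s).1 := Nat.find_spec hQ
  refine ⟨⟨n, hnpos, fun i => (g (s + i % n)).1, ?_, ?_, ?_⟩, fun i => (g (s + i % n)).2⟩
  · intro i
    show (g (s + (i + n) % n)).1 = (g (s + i % n)).1
    rw [Nat.add_mod_right]
  · intro i
    show tl (g (s + i % n)).1 = hd (g (s + (i + 1) % n)).1
    rw [← hg (s + i % n)]
    have key : (i + 1) % n = (i % n + 1) % n := by
      conv_lhs => rw [← Nat.mod_add_div i n]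
      rw [show i % n + n * (i / n) + 1 = i % n + 1 + n * (i / n) by ring,
        Nat.add_mul_mod_self_left]
    rw [key]
    rcases Nat.lt_or_ge (i % n + 1) n with h | h
    · rw [Nat.mod_eq_of_lt h, ← Nat.add_assoc]
    · have heq : i % n + 1 = n := by have := Nat.mod_lt i hnpos; omega
      rw [heq, Nat.mod_self, Nat.add_zero]
      have h2 : s + i % n + 1 = s + n := by omega
      rw [h2]
      exact hs
  · intro i j hi hj hij hcontra
    replace hcontra : hd (g (s + i % n)).1 = hd (g (s + j % n)).1 := hcontra
    have h1 : ∀ m, 0 < m → m < n → ¬(∃ s, hd (g (s + m)).1 = hd (g s).1) := by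
      intro m hm hmn hexm
      exact Nat.find_min hQ hmn ⟨hm, hexm⟩
    rcases Nat.lt_or_ge i j with h | h
    · refine h1 (j - i) (by omega) (by omega) ⟨s + i % n, ?_⟩
      rw [Nat.mod_eq_of_lt hi, Nat.mod_eq_of_lt hj] at hcontra
      rw [Nat.mod_eq_of_lt hi, show s + i + (j - i) = s + j by omega]
      exact hcontra.symm
    · have h' : j < i := by omega
      refine h1 (i - j) (by omega) (by omega) ⟨s + j % n, ?_⟩
      rw [Nat.mod_eq_of_lt hi, Nat.mod_eq_of_lt hj] at hcontra
      rw [Nat.mod_eq_of_lt hj, show s + j + (i - j) = s + i by omega]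
      exact hcontra

end D2b

set_option linter.unusedSectionVars false
section D3
variable {E V : Type*} [Fintype E] [Fintype V] [DecidableEq E] [DecidableEq V]

theorem circ_decomp (hd tl : E → V) :
    ∀ (N : ℕ) (q : E → ℝ), (Finset.univ.filter fun f => q f ≠ 0).card ≤ N →
    (∀ f, 0 ≤ q f) →
    (∀ v, ∑ f ∈ Finset.univ.filter (fun f => hd f = v), q f
        = ∑ f ∈ Finset.univ.filter (fun f => tl f = v), q f) →
    ∃ (n : ℕ) (lam : Fin n → ℝ) (c : Fin n → Cyc hd tl),
      (∀ i, 0 < lam i) ∧ (∀ i j, 0 < q ((c i).e j)) ∧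
      (∀ f, q f = ∑ i, lam i * cntR (c i) f) := by
  intro N
  induction N with
  | zero =>
    intro q hcard _ _
    refine ⟨0, Fin.elim0, Fin.elim0, fun i => i.elim0, fun i => i.elim0, fun f => ?_⟩
    have : q f = 0 := by
      by_contra h
      have : f ∈ Finset.univ.filter fun f => q f ≠ 0 := by simp [h]
      have := Finset.card_pos.2 ⟨f, this⟩
      omega
    simp [this]
  | succ N ih =>
    intro q hcard hq0 hcons
    by_cases hz : ∀ f, q f = 0
    · exact ⟨0, Fin.elim0, Fin.elim0, fun i => i.elim0, fun i => i.elim0,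
        fun f => by simp [hz f]⟩
    push_neg at hz
    obtain ⟨e₀, he₀⟩ := hz
    obtain ⟨c, hc⟩ := exists_cyc hd tl q hq0 hcons ⟨e₀, lt_of_le_of_ne (hq0 e₀) (Ne.symm he₀)⟩
    have hrne : (Finset.range c.n).Nonempty := Finset.nonempty_range_iff.2 c.npos.ne'
    set δ : ℝ := (Finset.range c.n).inf' hrne (fun i => q (c.e i)) with hδ
    have hδpos : 0 < δ := by
      rw [hδ, Finset.lt_inf'_iff]
      exact fun i _ => hc i
    have hδle : ∀ i, i < c.n → δ ≤ q (c.e i) := fun i hi =>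
      Finset.inf'_le _ (Finset.mem_range.2 hi)
    set q' : E → ℝ := fun f => q f - δ * cntR c f with hq'
    have hq'0 : ∀ f, 0 ≤ q' f := by
      intro f
      rw [hq']
      simp only
      rw [cntR_eq]
      split_ifs with h
      · obtain ⟨i, hi, hf⟩ := h
        have := hδle i hi
        rw [hf] at this
        linarith
      · linarith [hq0 f]
    have hle : ∀ f, q' f ≤ q f := by
      intro f
      have := mul_nonneg hδpos.le (cntR_nonneg c f)
      simp only [hq']
      linarith
    have hcons' : ∀ v, ∑ f ∈ Finset.univ.filter (fun f => hd f = v), q' f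
        = ∑ f ∈ Finset.univ.filter (fun f => tl f = v), q' f := by
      intro v
      simp only [hq', Finset.sum_sub_distrib, ← Finset.mul_sum]
      rw [hcons v, cyc_cons c v]
    -- support decreases strictly
    obtain ⟨i₀, hi₀, hi₀eq⟩ := Finset.exists_mem_eq_inf' hrne (fun i => q (c.e i))
    rw [Finset.mem_range] at hi₀
    have hq'i₀ : q' (c.e i₀) = 0 := by
      have h1 : cntR c (c.e i₀) = 1 := by
        rw [cntR_eq, if_pos ⟨i₀, hi₀, rfl⟩]
      simp only [hq', h1, mul_one]
      rw [← hi₀eq, hδ]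
      ring
    have hsub : (Finset.univ.filter fun f => q' f ≠ 0)
        ⊂ (Finset.univ.filter fun f => q f ≠ 0) := by
      constructor
      · intro f hf
        rw [Finset.mem_filter] at hf ⊢
        refine ⟨hf.1, fun h0 => hf.2 ?_⟩
        have := hq'0 f
        have := hle f
        rw [h0] at this
        linarith
      · intro hsup
        have h1 : c.e i₀ ∈ Finset.univ.filter fun f => q f ≠ 0 := by
          simp [(hc i₀).ne']
        have h2 := hsup h1
        rw [Finset.mem_filter] at h2
        exact h2.2 hq'i₀
    have hcard' : (Finset.univ.filter fun f => q' f ≠ 0).card ≤ N := by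
      have := Finset.card_lt_card hsub
      omega
    obtain ⟨n', lam, cs, hlam, hpos, hsum⟩ := ih q' hcard' hq'0 hcons'
    refine ⟨n' + 1, Fin.cons δ lam, Fin.cons c cs, ?_, ?_, ?_⟩
    · intro i
      refine Fin.cases ?_ ?_ i
      · simpa using hδpos
      · intro j; simpa using hlam j
    · intro i j
      refine Fin.cases ?_ ?_ i
      · simpa using hc j
      · intro i'
        simp only [Fin.cons_succ]
        exact lt_of_lt_of_le (hpos i' j) (hle _)
    · intro f
      rw [Fin.sum_univ_succ]
      simp only [Fin.cons_zero, Fin.cons_succ]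
      have := hsum f
      simp only [hq'] at this
      linarith
end D3

set_option linter.unusedSectionVars false
section SFTlem
variable {d : ℕ} {M : Fin d → Fin d → Bool}

lemma SFT.continuous_shift : Continuous (SFT.shift (d := d) (M := M)) := by
  apply Continuous.subtype_mk
  exact continuous_pi fun n => (continuous_apply (n + 1)).comp continuous_subtype_val

lemma SFT.measurable_shift : Measurable (SFT.shift (d := d) (M := M)) :=
  SFT.continuous_shift.measurable

lemma SFT.iterate_apply (i : ℕ) (x : SFT d M) (p : ℕ) :
    (SFT.shift^[i] x).1 p = x.1 (p + i) := by
  induction i generalizing x p with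
  | zero => rfl
  | succ i ih =>
    rw [Function.iterate_succ_apply, ih]
    show x.1 (p + i + 1) = x.1 (p + (i + 1))
    rw [Nat.add_assoc]

/-- The window of length `k` of a point of the subshift. -/
def window (k : ℕ) (x : SFT d M) : Fin k → Fin d := fun i => x.1 i

lemma continuous_window (k : ℕ) : Continuous (window (d := d) (M := M) k) :=
  continuous_pi fun i => (continuous_apply (i : ℕ)).comp continuous_subtype_val

lemma measurableSet_window_fiber (k : ℕ) (w : Fin k → Fin d) :
    MeasurableSet (window (d := d) (M := M) k ⁻¹' {w}) :=
  (((isOpen_discrete {w}).preimage (continuous_window k))).measurableSet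

end SFTlem

set_option linter.unusedSectionVars false
section Plem
variable {d : ℕ} {M : Fin d → Fin d → Bool} {m : ℕ}

open scoped Classical in
/-- A choice of value of `Φ` on the length-`k` cylinder of the word `w`. -/
noncomputable def PhiHat (k : ℕ) (Φ : SFT d M → EuclideanSpace ℝ (Fin m))
    (w : Fin k → Fin d) : EuclideanSpace ℝ (Fin m) :=
  if h : (window (d := d) (M := M) k ⁻¹' {w}).Nonempty then Φ h.some else 0

variable {k : ℕ} {Φ : SFT d M → EuclideanSpace ℝ (Fin m)}
  (hΦ : ∀ x y : SFT d M, (∀ i < k, x.1 i = y.1 i) → Φ x = Φ y)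

include hΦ in
lemma PhiHat_window (x : SFT d M) : PhiHat k Φ (window k x) = Φ x := by
  have hne : (window (d := d) (M := M) k ⁻¹' {window k x}).Nonempty := ⟨x, rfl⟩
  classical
  rw [PhiHat, dif_pos hne]
  apply hΦ
  intro i hi
  have hx : window k hne.some = window k x := hne.some_mem
  exact congrFun hx ⟨i, hi⟩

include hΦ in
lemma Phi_rep : ∀ x : SFT d M, Φ x
    = ∑ w : Fin k → Fin d,
        Set.indicator (window k ⁻¹' {w}) (fun _ => PhiHat k Φ w) x := by
  intro x
  rw [Finset.sum_eq_single (window k x)]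
  · rw [Set.indicator_of_mem (by exact rfl : x ∈ window k ⁻¹' {window k x})]
    exact (PhiHat_window hΦ x).symm
  · intro w _ hw
    apply Set.indicator_of_notMem
    intro hx
    exact hw (Set.mem_preimage.1 hx).symm
  · intro h
    exact absurd (Finset.mem_univ _) h

include hΦ in
lemma Phi_integrable (μ : Measure (SFT d M)) [IsFiniteMeasure μ] :
    Integrable Φ μ := by
  rw [show Φ = fun x => ∑ w : Fin k → Fin d,
      Set.indicator (window k ⁻¹' {w}) (fun _ => PhiHat k Φ w) x from funext (Phi_rep hΦ)]
  apply integrable_finset_sum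
  intro w _
  exact (integrable_const (PhiHat k Φ w)).indicator (measurableSet_window_fiber k w)

include hΦ in
lemma Phi_integral_eq_sum (μ : Measure (SFT d M)) [IsFiniteMeasure μ] :
    ∫ x, Φ x ∂μ
      = ∑ w : Fin k → Fin d, (μ (window k ⁻¹' {w})).toReal • PhiHat k Φ w := by
  rw [show (fun x => Φ x) = fun x => ∑ w : Fin k → Fin d,
      Set.indicator (window k ⁻¹' {w}) (fun _ => PhiHat k Φ w) x from funext (Phi_rep hΦ)]
  rw [integral_finset_sum _ (fun w _ =>
    (integrable_const (PhiHat k Φ w)).indicator (measurableSet_window_fiber k w))]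
  refine Finset.sum_congr rfl fun w _ => ?_
  rw [integral_indicator_const _ (measurableSet_window_fiber k w)]
  rfl

end Plem

section Fiber
variable {X : Type*} [MeasurableSpace X]

lemma fiber_sum (μ : Measure X) [IsFiniteMeasure μ] {ι κ : Type*} [Fintype ι]
    [DecidableEq ι] [DecidableEq κ] (g : X → ι) (h : ι → κ)
    (hmeas : ∀ u, MeasurableSet (g ⁻¹' {u})) (v : κ) :
    ∑ u ∈ Finset.univ.filter (fun u => h u = v), (μ (g ⁻¹' {u})).toReal
      = (μ ((fun x => h (g x)) ⁻¹' {v})).toReal := by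
  have hset : ((fun x => h (g x)) ⁻¹' {v})
      = ⋃ u ∈ Finset.univ.filter (fun u => h u = v), g ⁻¹' {u} := by
    ext x
    simp only [Set.mem_preimage, Set.mem_singleton_iff, Set.mem_iUnion,
      Finset.mem_filter, Finset.mem_univ, true_and]
    constructor
    · intro hx; exact ⟨g x, hx, rfl⟩
    · rintro ⟨u, hu, hx⟩; rw [hx]; exact hu
  have hdisj : (↑(Finset.univ.filter (fun u => h u = v)) : Set ι).PairwiseDisjoint
      (fun u => g ⁻¹' {u}) := by
    intro u _ u' _ huu'
    apply Set.disjoint_left.2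
    intro x hx hx'
    exact huu' ((Set.mem_preimage.1 hx).symm.trans (Set.mem_preimage.1 hx'))
  rw [hset, measure_biUnion_finset hdisj (fun u _ => hmeas u), ENNReal.toReal_sum
    (fun u _ => measure_ne_top μ _)]

lemma fiber_total (μ : Measure X) [IsFiniteMeasure μ] {ι : Type*} [Fintype ι]
    [DecidableEq ι] (g : X → ι) (hmeas : ∀ u, MeasurableSet (g ⁻¹' {u})) :
    ∑ u : ι, (μ (g ⁻¹' {u})).toReal = (μ Set.univ).toReal := by
  have hset : (Set.univ : Set X) = ⋃ u ∈ (Finset.univ : Finset ι), g ⁻¹' {u} := by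
    ext x
    simp
  have hdisj : (↑(Finset.univ : Finset ι) : Set ι).PairwiseDisjoint
      (fun u => g ⁻¹' {u}) := by
    intro u _ u' _ huu'
    apply Set.disjoint_left.2
    intro x hx hx'
    exact huu' ((Set.mem_preimage.1 hx).symm.trans (Set.mem_preimage.1 hx'))
  rw [hset, measure_biUnion_finset hdisj (fun u _ => hmeas u), ENNReal.toReal_sum
    (fun u _ => measure_ne_top μ _)]

end Fiber

/-- Head (first `k` letters) of a word of length `k+1`. -/
def hdm (d k : ℕ) (u : Fin (k + 1) → Fin d) : Fin k → Fin d :=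
  fun i => u ⟨i.1, Nat.lt_succ_of_lt i.2⟩

/-- Tail (last `k` letters) of a word of length `k+1`. -/
def tlm (d k : ℕ) (u : Fin (k + 1) → Fin d) : Fin k → Fin d :=
  fun i => u ⟨i.1 + 1, Nat.succ_lt_succ i.2⟩

section CycPoint
variable {d : ℕ} {M : Fin d → Fin d → Bool} {k : ℕ}

lemma cyc_point (hk : 0 < k) (c : Cyc (hdm d k) (tlm d k))
    (hne : ∀ i, ((window (d := d) (M := M) (k + 1)) ⁻¹' {c.e i}).Nonempty) :
    ∃ x : SFT d M, KElem k x c.n ∧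
      ∀ i, window k (SFT.shift^[i] x) = hdm d k (c.e i) := by
  -- the underlying sequence
  set y : ℕ → Fin d := fun p => c.e p ⟨0, Nat.succ_pos k⟩ with hy
  -- window property
  have W : ∀ l, l ≤ k → ∀ p, ∀ (h : l < k + 1), y (p + l) = c.e p ⟨l, h⟩ := by
    intro l
    induction l with
    | zero => intro _ p h; rw [Nat.add_zero]
    | succ l ih =>
      intro hl p h
      have hlk : l < k := hl
      have h1 : y (p + (l + 1)) = y ((p + 1) + l) := by ring_nf
      rw [h1, ih (Nat.le_of_lt hlk) (p + 1) (Nat.lt_succ_of_lt hlk)]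
      have h2 := congrFun (c.link p) ⟨l, hlk⟩
      exact (h2.symm : hdm d k (c.e (p + 1)) ⟨l, hlk⟩ = tlm d k (c.e p) ⟨l, hlk⟩)
  -- admissibility of words on the cycle
  have hM : ∀ i l (hl : l < k),
      M (c.e i ⟨l, by omega⟩) (c.e i ⟨l + 1, by omega⟩) = true := by
    intro i l hl
    obtain ⟨z, hz⟩ := hne i
    have hz' : ∀ j : Fin (k + 1), z.1 j.1 = c.e i j := fun j =>
      congrFun (Set.mem_singleton_iff.1 hz) j
    have := z.2 l
    rw [hz' ⟨l, by omega⟩] at this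
    rw [hz' ⟨l + 1, by omega⟩] at this
    exact this
  -- the point
  have hadm : ∀ p, M (y p) (y (p + 1)) = true := by
    intro p
    have h0 : y p = c.e p ⟨0, by omega⟩ := by
      have := W 0 (Nat.zero_le k) p (by omega); rw [← this, Nat.add_zero]
    have h1 : y (p + 1) = c.e p ⟨1, by omega⟩ := W 1 hk p (by omega)
    rw [h0, h1]
    exact hM p 0 hk
  set x : SFT d M := ⟨y, hadm⟩ with hx
  -- windows of iterates
  have win : ∀ i, window k (SFT.shift^[i] x) = hdm d k (c.e i) := by
    intro i
    funext j
    show (SFT.shift^[i] x).1 j.1 = hdm d k (c.e i) j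
    rw [SFT.iterate_apply]
    show y (j.1 + i) = c.e i ⟨j.1, Nat.lt_succ_of_lt j.2⟩
    rw [Nat.add_comm]
    exact W j.1 (Nat.le_of_lt j.2) i (Nat.lt_succ_of_lt j.2)
  have hper : Function.IsPeriodicPt SFT.shift c.n x := by
    show SFT.shift^[c.n] x = x
    apply Subtype.ext
    funext p
    show (SFT.shift^[c.n] x).1 p = y p
    rw [SFT.iterate_apply]
    show c.e (p + c.n) ⟨0, _⟩ = c.e p ⟨0, _⟩
    rw [c.per p]
  refine ⟨x, ⟨c.npos, hper, ?_, ?_⟩, win⟩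
  · -- minimality
    intro p hp hpper
    by_contra hlt
    push_neg at hlt
    have heq : hdm d k (c.e 0) = hdm d k (c.e p) := by
      rw [← win 0, ← win p]
      have h0 : SFT.shift^[0] x = x := rfl
      have hpp : SFT.shift^[p] x = x := hpper
      rw [h0, hpp]
    exact c.inj 0 p c.npos hlt (by omega) heq
  · -- distinct windows
    intro i j hi hj hij
    have hne' : hdm d k (c.e i) ≠ hdm d k (c.e j) := c.inj i j hi hj hij
    obtain ⟨a, ha⟩ := Function.ne_iff.1 hne'
    refine ⟨a.1, a.2, ?_⟩
    have h1 : (SFT.shift^[i] x).1 a.1 = hdm d k (c.e i) a := congrFun (win i) a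
    have h2 : (SFT.shift^[j] x).1 a.1 = hdm d k (c.e j) a := congrFun (win j) a
    rw [h1, h2]
    exact ha
end CycPoint

open scoped ENNReal NNReal
section RotLem
variable {d : ℕ} {M : Fin d → Fin d → Bool} {m k : ℕ}
  {Φ : SFT d M → EuclideanSpace ℝ (Fin m)}
  (hΦ : ∀ x y : SFT d M, (∀ i < k, x.1 i = y.1 i) → Φ x = Φ y)

include hΦ in
lemma Phi_continuous : Continuous Φ := by
  have hrep : Φ = (PhiHat k Φ) ∘ (window k) := by
    funext x
    exact (PhiHat_window hΦ x).symm
  rw [hrep]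
  exact (((IsLocallyConstant.iff_continuous (window (d := d) (M := M) k)).2
    (continuous_window k)).comp (PhiHat k Φ)).continuous

include hΦ in
lemma periodic_mem_Rot (x : SFT d M) (n : ℕ) (hn : 0 < n)
    (hper : Function.IsPeriodicPt SFT.shift n x) :
    ((n : ℝ)⁻¹ • ∑ i ∈ Finset.range n, Φ (SFT.shift^[i] x)) ∈ Rot Φ := by
  classical
  set ν : Measure (SFT d M) :=
    ((n : ℝ≥0∞))⁻¹ • ∑ i ∈ Finset.range n, Measure.dirac (SFT.shift^[i] x) with hν
  have hnon : (n : ℝ≥0∞) ≠ 0 := by simp [hn.ne']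
  have hntop : (n : ℝ≥0∞) ≠ ⊤ := by simp
  have hprob : IsProbabilityMeasure ν := by
    constructor
    rw [hν, Measure.smul_apply, Measure.coe_finset_sum, Finset.sum_apply]
    simp only [Measure.dirac_apply_of_mem (Set.mem_univ _)]
    rw [Finset.sum_const, Finset.card_range, nsmul_eq_mul, mul_one, smul_eq_mul,
      ENNReal.inv_mul_cancel hnon hntop]
  have hinv : InvariantProb ⟨ν, hprob⟩ := by
    show ν.map SFT.shift = ν
    apply Measure.ext
    intro s hs
    rw [Measure.map_apply SFT.measurable_shift hs]
    have hps : MeasurableSet (SFT.shift ⁻¹' s) := SFT.measurable_shift hs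
    rw [hν, Measure.smul_apply, Measure.smul_apply, Measure.coe_finset_sum,
      Finset.sum_apply, Finset.sum_apply]
    congr 1
    have hterm : ∀ i, Measure.dirac (SFT.shift^[i] x) (SFT.shift ⁻¹' s)
        = s.indicator (fun _ => (1 : ℝ≥0∞)) (SFT.shift^[i + 1] x) := by
      intro i
      rw [Measure.dirac_apply' _ hps]
      rw [Function.iterate_succ_apply']
      rfl
    have hterm2 : ∀ i, Measure.dirac (SFT.shift^[i] x) s
        = s.indicator (fun _ => (1 : ℝ≥0∞)) (SFT.shift^[i] x) := fun i =>
      Measure.dirac_apply' _ hs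
    rw [Finset.sum_congr rfl fun i _ => hterm i, Finset.sum_congr rfl fun i _ => hterm2 i]
    set F : ℕ → ℝ≥0∞ := fun i => s.indicator (fun _ => (1 : ℝ≥0∞)) (SFT.shift^[i] x) with hF
    have hFn : F n = F 0 := by
      simp only [hF]
      rw [show SFT.shift^[n] x = x from hper]
      rfl
    have h1 := Finset.sum_range_succ F n
    have h2 := Finset.sum_range_succ' F n
    rw [h1, hFn] at h2
    have hF0 : F 0 ≠ ⊤ := by
      simp only [hF, Set.indicator_apply]
      split_ifs <;> simp
    exact WithTop.add_right_cancel hF0 h2.symm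
  refine ⟨⟨ν, hprob⟩, hinv, ?_⟩
  show ∫ x', Φ x' ∂ν = _
  rw [hν]
  rw [integral_smul_measure]
  rw [integral_finset_sum_measure (fun i _ => Phi_integrable hΦ _)]
  have hd : ∀ i, ∫ x', Φ x' ∂(Measure.dirac (SFT.shift^[i] x)) = Φ (SFT.shift^[i] x) := by
    intro i
    apply integral_dirac' _ _
    exact (Phi_continuous hΦ).stronglyMeasurable
  rw [Finset.sum_congr rfl fun i _ => hd i]
  congr 1
  simp
end RotLem

section RotConvex
variable {d : ℕ} {M : Fin d → Fin d → Bool} {m k : ℕ}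
  {Φ : SFT d M → EuclideanSpace ℝ (Fin m)}
  (hΦ : ∀ x y : SFT d M, (∀ i < k, x.1 i = y.1 i) → Φ x = Φ y)

include hΦ in
lemma Rot_convex : Convex ℝ (Rot Φ) := by
  rintro w1 ⟨μ1, hinv1, hint1⟩ w2 ⟨μ2, hinv2, hint2⟩ a b ha hb hab
  set ν : Measure (SFT d M) :=
    ENNReal.ofReal a • (μ1 : Measure (SFT d M)) + ENNReal.ofReal b • (μ2 : Measure (SFT d M))
    with hν
  have hprob : IsProbabilityMeasure ν := by
    constructor
    rw [hν, Measure.add_apply, Measure.smul_apply, Measure.smul_apply]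
    simp only [measure_univ, smul_eq_mul, mul_one]
    rw [← ENNReal.ofReal_add ha hb, hab, ENNReal.ofReal_one]
  have hfin1 : IsFiniteMeasure (ENNReal.ofReal a • (μ1 : Measure (SFT d M))) := by
    constructor
    rw [Measure.smul_apply, measure_univ, smul_eq_mul, mul_one]
    exact ENNReal.ofReal_lt_top
  have hfin2 : IsFiniteMeasure (ENNReal.ofReal b • (μ2 : Measure (SFT d M))) := by
    constructor
    rw [Measure.smul_apply, measure_univ, smul_eq_mul, mul_one]
    exact ENNReal.ofReal_lt_top
  refine ⟨⟨ν, hprob⟩, ?_, ?_⟩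
  · show ν.map SFT.shift = ν
    apply Measure.ext
    intro s hs
    rw [Measure.map_apply SFT.measurable_shift hs, hν]
    have hps : MeasurableSet (SFT.shift ⁻¹' s) := SFT.measurable_shift hs
    rw [Measure.add_apply, Measure.add_apply, Measure.smul_apply, Measure.smul_apply,
      Measure.smul_apply, Measure.smul_apply]
    have e1 : (μ1 : Measure (SFT d M)) (SFT.shift ⁻¹' s) = (μ1 : Measure (SFT d M)) s := by
      conv_rhs => rw [← hinv1]
      rw [Measure.map_apply SFT.measurable_shift hs]
    have e2 : (μ2 : Measure (SFT d M)) (SFT.shift ⁻¹' s) = (μ2 : Measure (SFT d M)) s := by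
      conv_rhs => rw [← hinv2]
      rw [Measure.map_apply SFT.measurable_shift hs]
    rw [e1, e2]
  · show (∫ x, Φ x ∂ν) = a • w1 + b • w2
    rw [hν, integral_add_measure (Phi_integrable hΦ _) (Phi_integrable hΦ _),
      integral_smul_measure, integral_smul_measure, hint1, hint2,
      ENNReal.toReal_ofReal ha, ENNReal.toReal_ofReal hb]
end RotConvex

section Finiteness
variable {d : ℕ} {M : Fin d → Fin d → Bool} {m k : ℕ}

lemma periodic_mod (x : SFT d M) (n : ℕ) (hn : 0 < n)
    (hper : Function.IsPeriodicPt SFT.shift n x) : ∀ p, x.1 p = x.1 (p % n) := by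
  have hstep : ∀ p, x.1 (p + n) = x.1 p := by
    intro p
    conv_rhs => rw [← (hper : SFT.shift^[n] x = x)]
    rw [SFT.iterate_apply]
  intro p
  induction p using Nat.strong_induction_on with
  | _ p ih =>
    rcases lt_or_ge p n with h | h
    · rw [Nat.mod_eq_of_lt h]
    · have h2 : p - n + n = p := by omega
      calc x.1 p = x.1 (p - n + n) := by rw [h2]
        _ = x.1 (p - n) := hstep _
        _ = x.1 ((p - n) % n) := ih _ (by omega)
        _ = x.1 (p % n) := by rw [← Nat.add_mod_right (p - n) n, h2]

lemma KElem_period_le (x : SFT d M) (n : ℕ) (hx : KElem k x n) : n ≤ d ^ k := by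
  obtain ⟨hn, hper, hmin, hdist⟩ := hx
  have hinj : Function.Injective (fun i : Fin n => window k (SFT.shift^[i.1] x)) := by
    intro i j hij
    by_contra hne
    obtain ⟨l, hl, hneq⟩ := hdist i.1 j.1 i.2 j.2 (fun h => hne (Fin.ext h))
    exact hneq (congrFun hij ⟨l, hl⟩)
  have := Fintype.card_le_of_injective _ hinj
  simpa [Fintype.card_fun] using this

lemma elem_set_finite (Φ : SFT d M → EuclideanSpace ℝ (Fin m)) :
    {w : EuclideanSpace ℝ (Fin m) | ∃ (x : SFT d M) (n : ℕ), KElem k x n ∧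
        w = (n : ℝ)⁻¹ • ∑ i ∈ Finset.range n, Φ (SFT.shift^[i] x)}.Finite := by
  have hT : {p : SFT d M × ℕ | KElem k p.1 p.2}.Finite := by
    set G : SFT d M × ℕ → (Fin (d ^ k) → Fin d) × ℕ :=
      fun p => (fun i => p.1.1 i.1, p.2) with hG
    apply Set.Finite.of_finite_image (f := G)
    · apply Set.Finite.subset ((Set.finite_univ (α := Fin (d ^ k) → Fin d)).prod
        (Set.finite_Iic (d ^ k)))
      rintro ⟨w, n⟩ ⟨p, hp, heq⟩
      have hn : n = p.2 := (congrArg Prod.snd heq).symm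
      exact ⟨Set.mem_univ _, hn ▸ KElem_period_le p.1 p.2 hp⟩
    · rintro ⟨x, n⟩ hxn ⟨x', n'⟩ hx'n' hGeq
      have hn : n = n' := congrArg Prod.snd hGeq
      subst hn
      have hw : (fun i : Fin (d ^ k) => x.1 i.1) = fun i : Fin (d ^ k) => x'.1 i.1 :=
        congrArg Prod.fst hGeq
      have hx : x = x' := by
        apply Subtype.ext
        funext p
        have h1 := periodic_mod x n hxn.1 hxn.2.1 p
        have h2 := periodic_mod x' n hx'n'.1 hx'n'.2.1 p
        have hlt : p % n < d ^ k := lt_of_lt_of_le (Nat.mod_lt p hxn.1)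
          (KElem_period_le x n hxn)
        rw [h1, h2]
        exact congrFun hw ⟨p % n, hlt⟩
      rw [hx]
  have him := hT.image (fun p : SFT d M × ℕ =>
    ((p.2 : ℝ))⁻¹ • ∑ i ∈ Finset.range p.2, Φ (SFT.shift^[i] p.1))
  apply him.subset
  rintro w ⟨x, n, hxn, rfl⟩
  exact ⟨(x, n), hxn, rfl⟩
end Finiteness

section Main
variable {d : ℕ} {M : Fin d → Fin d → Bool} {m : ℕ}

lemma Rot_subset_hull (k : ℕ) (hk : 0 < k)
    (Φ : SFT d M → EuclideanSpace ℝ (Fin m))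
    (hΦ : ∀ x y : SFT d M, (∀ i < k, x.1 i = y.1 i) → Φ x = Φ y) :
    Rot Φ ⊆ convexHull ℝ
      {w : EuclideanSpace ℝ (Fin m) | ∃ (x : SFT d M) (n : ℕ), KElem k x n ∧
        w = (n : ℝ)⁻¹ • ∑ i ∈ Finset.range n, Φ (SFT.shift^[i] x)} := by
  classical
  rintro w ⟨μ, hinv, rfl⟩
  set S := {w : EuclideanSpace ℝ (Fin m) | ∃ (x : SFT d M) (n : ℕ), KElem k x n ∧
        w = (n : ℝ)⁻¹ • ∑ i ∈ Finset.range n, Φ (SFT.shift^[i] x)} with hS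
  -- edge weights
  set q : (Fin (k + 1) → Fin d) → ℝ :=
    fun u => ((μ : Measure (SFT d M)) (window (k + 1) ⁻¹' {u})).toReal with hq
  have hq0 : ∀ u, 0 ≤ q u := fun u => ENNReal.toReal_nonneg
  have hshift : ∀ A : Set (SFT d M), MeasurableSet A →
      (μ : Measure (SFT d M)) (SFT.shift ⁻¹' A) = (μ : Measure (SFT d M)) A := by
    intro A hA
    conv_rhs => rw [← hinv]
    rw [Measure.map_apply SFT.measurable_shift hA]
  have hcons : ∀ v : Fin k → Fin d,
      ∑ u ∈ Finset.univ.filter (fun u => hdm d k u = v), q u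
        = ∑ u ∈ Finset.univ.filter (fun u => tlm d k u = v), q u := by
    intro v
    rw [hq]
    rw [fiber_sum _ (window (k + 1)) (hdm d k) (measurableSet_window_fiber _) v,
      fiber_sum _ (window (k + 1)) (tlm d k) (measurableSet_window_fiber _) v]
    have hhd : (fun x : SFT d M => hdm d k (window (k + 1) x)) = window k := rfl
    have htl : (fun x : SFT d M => tlm d k (window (k + 1) x)) ⁻¹' {v}
        = SFT.shift ⁻¹' (window (d := d) (M := M) k ⁻¹' {v}) := rfl
    rw [hhd, htl, hshift _ (measurableSet_window_fiber k v)]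
  -- flow decomposition into simple cycles
  obtain ⟨N, lam, cs, hlam, hposq, hsum⟩ :=
    circ_decomp (hdm d k) (tlm d k) (Finset.univ.filter fun f => q f ≠ 0).card q
      le_rfl hq0 hcons
  -- cylinders along cycles are nonempty
  have hcylne : ∀ i j, ((window (d := d) (M := M) (k + 1)) ⁻¹' {(cs i).e j}).Nonempty := by
    intro i j
    rw [Set.nonempty_iff_ne_empty]
    intro hemp
    have : q ((cs i).e j) = 0 := by rw [hq]; simp only; rw [hemp]; simp
    exact absurd this (ne_of_gt (hposq i j))
  -- periodic points from cycles
  have hpts : ∀ i, ∃ x : SFT d M, KElem k x (cs i).n ∧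
      ∀ j, window k (SFT.shift^[j] x) = hdm d k ((cs i).e j) :=
    fun i => cyc_point hk (cs i) (fun j => hcylne i j)
  choose xs hKE hwin using hpts
  -- rotation vectors and weights
  set r : Fin N → EuclideanSpace ℝ (Fin m) := fun i =>
    (((cs i).n : ℝ))⁻¹ • ∑ j ∈ Finset.range (cs i).n, Φ (SFT.shift^[j] (xs i)) with hr
  have hrS : ∀ i, r i ∈ S := fun i => ⟨xs i, (cs i).n, hKE i, rfl⟩
  set b : Fin N → ℝ := fun i => lam i * ((cs i).n : ℝ) with hb
  have hb0 : ∀ i, 0 ≤ b i := fun i => mul_nonneg (hlam i).le (Nat.cast_nonneg _)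
  -- value of Φ̂ along cycles
  have hPhival : ∀ i j, PhiHat k Φ (hdm d k ((cs i).e j)) = Φ (SFT.shift^[j] (xs i)) := by
    intro i j
    rw [← hwin i j, PhiHat_window hΦ]
  -- the integral as a weighted sum over cycles
  have key : ∫ x, Φ x ∂(μ : Measure (SFT d M)) = ∑ i, b i • r i := by
    rw [Phi_integral_eq_sum hΦ]
    have h1 : ∀ w : Fin k → Fin d,
        ((μ : Measure (SFT d M)) (window k ⁻¹' {w})).toReal
          = ∑ u ∈ Finset.univ.filter (fun u => hdm d k u = w), q u := by
      intro w
      rw [hq, fiber_sum _ (window (k + 1)) (hdm d k) (measurableSet_window_fiber _) w]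
      rfl
    calc ∑ w : Fin k → Fin d,
          ((μ : Measure (SFT d M)) (window k ⁻¹' {w})).toReal • PhiHat k Φ w
        = ∑ w : Fin k → Fin d, ∑ u ∈ Finset.univ.filter (fun u => hdm d k u = w),
            q u • PhiHat k Φ (hdm d k u) := by
          refine Finset.sum_congr rfl fun w _ => ?_
          rw [h1 w, Finset.sum_smul]
          refine Finset.sum_congr rfl fun u hu => ?_
          rw [(Finset.mem_filter.1 hu).2]
      _ = ∑ u : Fin (k + 1) → Fin d, q u • PhiHat k Φ (hdm d k u) := by
          exact Finset.sum_fiberwise _ _ _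
      _ = ∑ u : Fin (k + 1) → Fin d, ∑ i : Fin N,
            (lam i * cntR (cs i) u) • PhiHat k Φ (hdm d k u) := by
          refine Finset.sum_congr rfl fun u _ => ?_
          rw [hsum u, Finset.sum_smul]
      _ = ∑ i : Fin N, ∑ u : Fin (k + 1) → Fin d,
            (lam i * cntR (cs i) u) • PhiHat k Φ (hdm d k u) := Finset.sum_comm
      _ = ∑ i : Fin N, ∑ j ∈ Finset.range (cs i).n,
            lam i • PhiHat k Φ (hdm d k ((cs i).e j)) := by
          refine Finset.sum_congr rfl fun i _ => ?_
          unfold cntR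
          calc ∑ u : Fin (k + 1) → Fin d,
              (lam i * ∑ j ∈ Finset.range (cs i).n, if (cs i).e j = u then (1:ℝ) else 0)
                • PhiHat k Φ (hdm d k u)
              = ∑ u : Fin (k + 1) → Fin d, ∑ j ∈ Finset.range (cs i).n,
                  (if (cs i).e j = u then lam i • PhiHat k Φ (hdm d k u) else 0) := by
                refine Finset.sum_congr rfl fun u _ => ?_
                rw [Finset.mul_sum, Finset.sum_smul]
                refine Finset.sum_congr rfl fun j _ => ?_
                split_ifs <;> simp
            _ = ∑ j ∈ Finset.range (cs i).n, ∑ u : Fin (k + 1) → Fin d,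
                  (if (cs i).e j = u then lam i • PhiHat k Φ (hdm d k u) else 0) :=
                Finset.sum_comm
            _ = ∑ j ∈ Finset.range (cs i).n,
                  lam i • PhiHat k Φ (hdm d k ((cs i).e j)) := by
                refine Finset.sum_congr rfl fun j _ => ?_
                rw [Finset.sum_ite_eq Finset.univ ((cs i).e j)
                  (fun u => lam i • PhiHat k Φ (hdm d k u))]
                simp
      _ = ∑ i : Fin N, b i • r i := by
          refine Finset.sum_congr rfl fun i _ => ?_
          rw [Finset.sum_congr rfl fun j _ => by rw [hPhival i j], ← Finset.smul_sum]
          have hnne : ((cs i).n : ℝ) ≠ 0 := Nat.cast_ne_zero.2 (cs i).npos.ne'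
          show lam i • _ = b i • r i
          rw [hr, hb]
          simp only
          rw [smul_smul, mul_assoc, mul_inv_cancel₀ hnne, mul_one]
  -- total mass is one
  have hbsum : ∑ i, b i = 1 := by
    have htot : ∑ u : Fin (k + 1) → Fin d, q u = 1 := by
      rw [hq]
      simp only
      rw [fiber_total _ (window (k + 1)) (measurableSet_window_fiber _)]
      simp
    rw [← htot]
    rw [Finset.sum_congr rfl fun u (_ : u ∈ Finset.univ) => hsum u, Finset.sum_comm]
    refine Finset.sum_congr rfl fun i _ => ?_
    rw [← Finset.mul_sum, cntR_total, hb]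
  -- conclude by convexity
  rw [key]
  have hmem := Finset.centerMass_mem_convexHull (Finset.univ : Finset (Fin N))
    (fun i _ => hb0 i) (by rw [hbsum]; norm_num) (fun i _ => hrS i)
  rwa [Finset.centerMass, hbsum, inv_one, one_smul] at hmem
end Main

/-- For a transitive subshift of finite type and a potential constant on cylinders of
length `k`, the rotation set is a polyhedron: it is the convex hull of the (finite) set of
rotation vectors of the periodic point measures of `k`-elementary periodic points. -/
theorem stmt14 (d k m : ℕ) (hk : 0 < k) (M : Fin d → Fin d → Bool)
    (htrans : ∀ U V : Set (SFT d M), IsOpen U → IsOpen V → U.Nonempty → V.Nonempty →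
      ∃ n : ℕ, ((SFT.shift)^[n] '' U ∩ V).Nonempty)
    (Φ : SFT d M → EuclideanSpace ℝ (Fin m))
    (hΦ : ∀ x y : SFT d M, (∀ i < k, x.1 i = y.1 i) → Φ x = Φ y) :
    {w : EuclideanSpace ℝ (Fin m) | ∃ (x : SFT d M) (n : ℕ), KElem k x n ∧
        w = (n : ℝ)⁻¹ • ∑ i ∈ Finset.range n, Φ (SFT.shift^[i] x)}.Finite ∧
    Rot Φ = convexHull ℝ
      {w : EuclideanSpace ℝ (Fin m) | ∃ (x : SFT d M) (n : ℕ), KElem k x n ∧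
        w = (n : ℝ)⁻¹ • ∑ i ∈ Finset.range n, Φ (SFT.shift^[i] x)} := by
  refine ⟨elem_set_finite Φ, Set.Subset.antisymm (Rot_subset_hull k hk Φ hΦ) ?_⟩
  apply convexHull_min ?_ (Rot_convex hΦ)
  rintro w ⟨x, n, hxn, rfl⟩
  exact periodic_mem_Rot hΦ x n hxn.1 hxn.2.1
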